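/- Let T₀ > 0, let ω be a modulus of continuity, and let θ : (0,T₀) → (0,∞) be continuous and nonincreasing. Assume that limsup_{t→0⁺} t·θ(t) < +∞ and that for every α ∈ (0,1) one has ω(σ)/σ^α → 0 as σ → 0⁺. Then m(λ)/log λ → 0 as λ → +∞. -/

import Mathlib

open Set Filter MeasureTheory

/-- A modulus of continuity: positive for positive arguments, tends to `0` at `0⁺`,
nondecreasing, and `σ ↦ σ / ω σ` is nondecreasing on `(0, ∞)`. -/
def IsModulusOfContinuity (ω : ℝ → ℝ) : Prop :=
  (∀ σ : ℝ, 0 < σ → 0 < ω σ) ∧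
  Tendsto ω (nhdsWithin 0 (Ioi 0)) (nhds 0) ∧
  (∀ s t : ℝ, 0 ≤ s → s ≤ t → ω s ≤ ω t) ∧
  (∀ s t : ℝ, 0 < s → s ≤ t → s / ω s ≤ t / ω t)

/-- Membership in the class `PS(T₀, μ₁, μ₂, ω, θ)` of propagation speeds. -/
def MemPS (T0 μ1 μ2 : ℝ) (ω θ : ℝ → ℝ) (c : ℝ → ℝ) : Prop :=
  ContinuousOn c (Icc 0 T0) ∧
  LocallyLipschitzOn (Ioo 0 T0) c ∧
  (∀ t ∈ Ioo 0 T0, μ1 ≤ c t ∧ c t ≤ μ2) ∧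
  (∀ t ∈ Icc 0 T0, ∀ s ∈ Icc 0 T0, |c t - c s| ≤ ω |t - s|) ∧
  (∀ᵐ t ∂(volume.restrict (Ioo 0 T0)), |deriv c t| ≤ θ t)

/-- The key quantity `m(λ) = inf { λ ω(1/λ) s + ∫_s^{T₀} θ : s ∈ (0, T₀] }`. -/
noncomputable def mFun (T0 : ℝ) (ω θ : ℝ → ℝ) (lam : ℝ) : ℝ :=
  sInf ((fun s => lam * ω (1 / lam) * s + ∫ t in s..T0, θ t) '' Ioc 0 T0)

/-- Derivative within the time interval `[0, T₀]`. -/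
noncomputable def der (T0 : ℝ) (u : ℝ → ℝ) : ℝ → ℝ :=
  fun t => derivWithin u (Icc 0 T0) t

/-- `u` is a (twice differentiable) solution of `u'' + λ² c(t) u = 0` on `[0, T₀]`. -/
def IsSol (T0 lam : ℝ) (c u : ℝ → ℝ) : Prop :=
  ∀ t ∈ Icc 0 T0,
    HasDerivWithinAt u (der T0 u t) (Icc 0 T0) t ∧
    HasDerivWithinAt (der T0 u) (-(lam ^ 2 * c t * u t)) (Icc 0 T0) t

/-- proof of Corollary `cor:1/t`, statement (1): if `t·θ(t)` is bounded
near `0⁺` and `ω(σ)/σ^α → 0` for every `α ∈ (0,1)`, then `m(λ)/log λ → 0`. -/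
theorem mFun_div_log_tendsto_zero
    (T0 : ℝ) (ω θ : ℝ → ℝ) (hT0 : 0 < T0)
    (hω : IsModulusOfContinuity ω)
    (hθcont : ContinuousOn θ (Ioo 0 T0))
    (hθpos : ∀ t ∈ Ioo 0 T0, 0 < θ t)
    (hθmono : AntitoneOn θ (Ioo 0 T0))
    (hθbdd : ∃ M : ℝ, ∀ᶠ t in nhdsWithin 0 (Ioi 0), t * θ t ≤ M)
    (hωsmall : ∀ α ∈ Ioo (0:ℝ) 1,
      Tendsto (fun σ => ω σ / σ ^ α) (nhdsWithin 0 (Ioi 0)) (nhds 0)) :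
    Tendsto (fun lam => mFun T0 ω θ lam / Real.log lam) atTop (nhds 0) := by
  -- integrability of θ on subintervals
  have hInt : ∀ a, a ∈ Ioo 0 T0 → IntegrableOn θ (Ioc a T0) := by
    intro a ha
    rw [integrableOn_Ioc_iff_integrableOn_Ioo]
    have hmeas : AEStronglyMeasurable θ (volume.restrict (Ioo a T0)) :=
      (hθcont.mono (Ioo_subset_Ioo ha.1.le le_rfl)).aestronglyMeasurable measurableSet_Ioo
    refine Integrable.mono' (g := fun _ => θ a)
      (integrableOn_const measure_Ioo_lt_top.ne) hmeas ?_
    refine (ae_restrict_iff' measurableSet_Ioo).2 (Filter.Eventually.of_forall ?_)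
    intro t ht
    have htm : t ∈ Ioo 0 T0 := ⟨ha.1.trans ht.1, ht.2⟩
    rw [Real.norm_eq_abs, abs_of_pos (hθpos t htm)]
    exact hθmono ha htm ht.1.le
  have hII : ∀ a b : ℝ, 0 < a → a < T0 → a ≤ b → b ≤ T0 → IntervalIntegrable θ volume a b := by
    intro a b ha haT hab hbT
    rw [intervalIntegrable_iff_integrableOn_Ioc_of_le hab]
    exact (hInt a ⟨ha, haT⟩).mono_set (Ioc_subset_Ioc le_rfl hbT)
  -- nonnegativity of the integrals
  have hint_nonneg : ∀ s, 0 < s → s ≤ T0 → 0 ≤ ∫ t in s..T0, θ t := by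
    intro s hs hsT
    rcases eq_or_lt_of_le hsT with rfl | hsT'
    · simp
    rw [intervalIntegral.integral_of_le hsT,
      ← Measure.restrict_congr_set (Ioo_ae_eq_Ioc (a := s) (b := T0))]
    refine integral_nonneg_of_ae ?_
    refine (ae_restrict_iff' measurableSet_Ioo).2 (Filter.Eventually.of_forall ?_)
    intro t ht
    exact (hθpos t ⟨hs.trans ht.1, ht.2⟩).le
  -- nonnegativity and upper bound of mFun
  have hm_nonneg : ∀ lam : ℝ, 0 < lam → 0 ≤ mFun T0 ω θ lam := by
    intro lam hlam
    refine Real.sInf_nonneg ?_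
    rintro x ⟨s, hs, rfl⟩
    have h1 : 0 ≤ lam * ω (1 / lam) * s :=
      mul_nonneg (mul_nonneg hlam.le (hω.1 _ (by positivity)).le) hs.1.le
    exact add_nonneg h1 (hint_nonneg s hs.1 hs.2)
  have hm_le : ∀ lam : ℝ, 0 < lam → ∀ s ∈ Ioc (0:ℝ) T0,
      mFun T0 ω θ lam ≤ lam * ω (1 / lam) * s + ∫ t in s..T0, θ t := by
    intro lam hlam s hs
    refine csInf_le ⟨0, ?_⟩ (mem_image_of_mem _ hs)
    rintro x ⟨s', hs', rfl⟩
    have h1 : 0 ≤ lam * ω (1 / lam) * s' :=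
      mul_nonneg (mul_nonneg hlam.le (hω.1 _ (by positivity)).le) hs'.1.le
    exact add_nonneg h1 (hint_nonneg s' hs'.1 hs'.2)
  -- set up constants
  rw [Metric.tendsto_nhds]
  intro ε hε
  obtain ⟨M₀, hM₀⟩ := hθbdd
  rw [eventually_nhdsWithin_iff, Metric.eventually_nhds_iff] at hM₀
  obtain ⟨δ₀, hδ₀pos, hδ₀⟩ := hM₀
  set M : ℝ := max M₀ 1 with hMdef
  have hMpos : (0:ℝ) < M := lt_of_lt_of_le one_pos (le_max_right _ _)
  set δ : ℝ := min (δ₀ / 2) (T0 / 2) with hδdef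
  have hδpos : 0 < δ := lt_min (by linarith) (by linarith)
  have hδT0 : δ < T0 := (min_le_right _ _).trans_lt (by linarith)
  have hbound : ∀ t : ℝ, 0 < t → t ≤ δ → θ t ≤ M / t := by
    intro t ht htδ
    have h2 : t < δ₀ := by
      have h4 := (min_le_left (δ₀ / 2) (T0 / 2))
      have h5 := htδ.trans h4
      linarith
    have h1 : dist t 0 < δ₀ := by rw [Real.dist_eq, sub_zero, abs_of_pos ht]; exact h2
    have h3 : t * θ t ≤ M₀ := hδ₀ h1 (mem_Ioi.2 ht)
    rw [le_div_iff₀ ht]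
    calc θ t * t = t * θ t := mul_comm _ _
      _ ≤ M₀ := h3
      _ ≤ M := le_max_left _ _
  set β : ℝ := min (ε / (2 * M)) (1 / 2) with hβdef
  have hβpos : 0 < β := lt_min (by positivity) (by norm_num)
  have hβhalf : β ≤ 1 / 2 := min_le_right _ _
  have hMβ : M * β ≤ ε / 2 := by
    have h6 : β ≤ ε / (2 * M) := min_le_left _ _
    rw [le_div_iff₀ (by positivity)] at h6
    nlinarith
  set α : ℝ := 1 - β / 2 with hαdef
  have hα : α ∈ Ioo (0:ℝ) 1 := ⟨by rw [hαdef]; linarith, by rw [hαdef]; linarith⟩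
  set C : ℝ := ∫ t in δ..T0, θ t with hCdef
  set K : ℝ := M * Real.log δ + C with hKdef
  -- the key integral bound: for 0 < s ≤ δ,  ∫_s^{T0} θ ≤ M (log δ - log s) + C
  have hIB : ∀ s : ℝ, 0 < s → s ≤ δ →
      (∫ t in s..T0, θ t) ≤ M * (Real.log δ - Real.log s) + C := by
    intro s hs hsδ
    have hsT : s < T0 := lt_of_le_of_lt hsδ hδT0
    have hsplit : (∫ t in s..δ, θ t) + (∫ t in δ..T0, θ t) = ∫ t in s..T0, θ t :=
      intervalIntegral.integral_add_adjacent_intervals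
        (hII s δ hs hsT hsδ hδT0.le) (hII δ T0 hδpos hδT0 hδT0.le le_rfl)
    rw [← hsplit]
    have hmono : (∫ t in s..δ, θ t) ≤ ∫ t in s..δ, M / t := by
      refine intervalIntegral.integral_mono_on hsδ (hII s δ hs hsT hsδ hδT0.le) ?_ ?_
      · apply ContinuousOn.intervalIntegrable
        apply ContinuousOn.div continuousOn_const continuousOn_id
        intro t ht
        rw [uIcc_of_le hsδ] at ht
        exact ne_of_gt (lt_of_lt_of_le hs ht.1)
      · intro t ht
        exact hbound t (lt_of_lt_of_le hs ht.1) ht.2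
    have hval : (∫ t in s..δ, M / t) = M * (Real.log δ - Real.log s) := by
      have h7 : (∫ t in s..δ, M / t) = M * ∫ t in s..δ, t⁻¹ := by
        simp_rw [div_eq_mul_inv]
        exact intervalIntegral.integral_const_mul M _
      rw [h7, integral_inv_of_pos hs hδpos, Real.log_div (ne_of_gt hδpos) (ne_of_gt hs)]
    have h8 := hmono.trans hval.le
    linarith
  -- tendsto facts
  have h1lam : Tendsto (fun lam : ℝ => 1 / lam) atTop (nhdsWithin 0 (Ioi 0)) := by
    refine tendsto_nhdsWithin_of_tendsto_nhds_of_eventually_within _ ?_ ?_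
    · simpa only [one_div] using tendsto_inv_atTop_zero
    · filter_upwards [eventually_gt_atTop (0:ℝ)] with lam hlam
      exact mem_Ioi.2 (by positivity)
  have hωα : Tendsto (fun lam : ℝ => ω (1 / lam) * lam ^ α) atTop (nhds 0) := by
    have h := (hωsmall α hα).comp h1lam
    refine h.congr' ?_
    filter_upwards [eventually_gt_atTop (0:ℝ)] with lam hlam
    simp only [Function.comp_apply]
    rw [one_div, Real.inv_rpow hlam.le, div_eq_mul_inv, inv_inv]
  have hA : Tendsto (fun lam : ℝ => lam * ω (1 / lam) * lam ^ (-β)) atTop (nhds 0) := by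
    have h2 := hωα.mul (tendsto_rpow_neg_atTop (show (0:ℝ) < β / 2 by positivity))
    rw [mul_zero] at h2
    refine h2.congr' ?_
    filter_upwards [eventually_gt_atTop (0:ℝ)] with lam hlam
    have e2 : ω (1 / lam) * lam ^ α * lam ^ (-(β / 2)) = ω (1 / lam) * lam ^ (1 - β) := by
      rw [mul_assoc, ← Real.rpow_add hlam]
      congr 2
      rw [hαdef]; ring
    have e1 : lam * ω (1 / lam) * lam ^ (-β) = ω (1 / lam) * lam ^ (1 - β) := by
      rw [show (1:ℝ) - β = 1 + -β by ring, Real.rpow_add hlam, Real.rpow_one]; ring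
    rw [e2, e1]
  have hK : Tendsto (fun lam : ℝ => K / Real.log lam) atTop (nhds 0) :=
    Tendsto.div_atTop tendsto_const_nhds Real.tendsto_log_atTop
  have hsδev : ∀ᶠ lam : ℝ in atTop, lam ^ (-β) ≤ δ := by
    filter_upwards [(tendsto_rpow_neg_atTop hβpos).eventually (ge_mem_nhds hδpos)] with lam h
    exact h
  have hAev : ∀ᶠ lam : ℝ in atTop, lam * ω (1 / lam) * lam ^ (-β) < ε / 4 := by
    exact hA.eventually (gt_mem_nhds (show (0:ℝ) < ε / 4 by positivity))
  have hKev : ∀ᶠ lam : ℝ in atTop, K / Real.log lam < ε / 4 := by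
    exact hK.eventually (gt_mem_nhds (show (0:ℝ) < ε / 4 by positivity))
  have hlogev : ∀ᶠ lam : ℝ in atTop, 1 ≤ Real.log lam :=
    Real.tendsto_log_atTop.eventually (eventually_ge_atTop 1)
  filter_upwards [eventually_gt_atTop (1:ℝ), hsδev, hAev, hKev, hlogev]
    with lam hlam1 hsδ hAε hKε hlog1
  have hlam0 : (0:ℝ) < lam := lt_trans one_pos hlam1
  have hlogpos : (0:ℝ) < Real.log lam := lt_of_lt_of_le one_pos hlog1
  set s : ℝ := lam ^ (-β) with hsdef
  have hs0 : 0 < s := Real.rpow_pos_of_pos hlam0 _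
  have hsmem : s ∈ Ioc (0:ℝ) T0 := ⟨hs0, hsδ.trans hδT0.le⟩
  have hlogs : Real.log s = -β * Real.log lam := Real.log_rpow hlam0 _
  have hm1 : mFun T0 ω θ lam ≤ lam * ω (1 / lam) * s + (M * β * Real.log lam + K) := by
    have h9 := hm_le lam hlam0 s hsmem
    have h10 := hIB s hs0 hsδ
    rw [hlogs] at h10
    rw [hKdef]
    nlinarith [h9, h10]
  have hA0 : 0 ≤ lam * ω (1 / lam) * s :=
    mul_nonneg (mul_nonneg hlam0.le (hω.1 _ (by positivity)).le) hs0.le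
  have hdiv : mFun T0 ω θ lam / Real.log lam ≤
      lam * ω (1 / lam) * s / Real.log lam + M * β + K / Real.log lam := by
    have h11 : (lam * ω (1 / lam) * s + (M * β * Real.log lam + K)) / Real.log lam =
        lam * ω (1 / lam) * s / Real.log lam + M * β + K / Real.log lam := by
      field_simp
      ring
    rw [← h11]
    exact div_le_div_of_nonneg_right hm1 hlogpos.le |>.trans_eq rfl
  have hfinal : mFun T0 ω θ lam / Real.log lam < ε := by
    have h12 : lam * ω (1 / lam) * s / Real.log lam ≤ lam * ω (1 / lam) * s :=
      div_le_self hA0 hlog1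
    have h13 : lam * ω (1 / lam) * s / Real.log lam < ε / 4 := lt_of_le_of_lt h12 hAε
    linarith [hdiv, hKε, hMβ]
  have hnn : 0 ≤ mFun T0 ω θ lam / Real.log lam :=
    div_nonneg (hm_nonneg lam hlam0) hlogpos.le
  rw [Real.dist_eq, sub_zero, abs_of_nonneg hnn]
  exact hfinal
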